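/- If G' is a subdivision of a connected multigraph G, then sn(G') = sn(G). -/

import Mathlib

/-- A finite multigraph on vertex set `V`: `mul u v` is the number of
parallel edges between `u` and `v`; there are no loops. -/
structure Multigraph (V : Type) where
  mul : V → V → ℕ
  symm : ∀ u v, mul u v = mul v u
  loopless : ∀ v, mul v v = 0

namespace Multigraph

variable {V : Type}

/-- Adjacency in a multigraph. -/
def Adj (G : Multigraph V) (u v : V) : Prop := 0 < G.mul u v

/-- The underlying simple graph of a multigraph. -/
def simple (G : Multigraph V) : SimpleGraph V where
  Adj u v := 0 < G.mul u v
  symm := ⟨fun u v h => by simpa [G.symm u v] using h⟩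
  loopless := ⟨fun v h => by simp [G.loopless] at h⟩

/-- A multigraph is connected if its underlying simple graph is. -/
def Connected (G : Multigraph V) : Prop := G.simple.Connected

/-- A (nonempty) connected subset of the vertices of a multigraph. -/
def ConnSubset (G : Multigraph V) (B : Finset V) : Prop :=
  B.Nonempty ∧ (SimpleGraph.induce (B : Set V) G.simple).Connected

variable [Fintype V] [DecidableEq V]

/-- The number of edges between `A` and its complement. -/
def cut (G : Multigraph V) (A : Finset V) : ℕ :=
  ∑ u ∈ A, ∑ v ∈ Aᶜ, G.mul u v

/-- A scramble: a collection of eggs, each a nonempty connected vertex subset. -/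
def IsScramble (G : Multigraph V) (S : Finset (Finset V)) : Prop :=
  ∀ E ∈ S, G.ConnSubset E

/-- A hitting set for a scramble: a set of vertices meeting every egg. -/
def IsHitting (S : Finset (Finset V)) (C : Finset V) : Prop :=
  ∀ E ∈ S, (E ∩ C).Nonempty

/-- `k` is a valid order for the scramble `S` if no hitting set has fewer than `k`
vertices, and every vertex set `A` containing an egg, with an egg in its
complement, has at least `k` crossing edges. -/
def ValidOrder (G : Multigraph V) (S : Finset (Finset V)) (k : ℕ) : Prop :=
  (∀ C : Finset V, IsHitting S C → k ≤ C.card) ∧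
  (∀ A : Finset V, (∃ E ∈ S, E ⊆ A) → (∃ E' ∈ S, E' ⊆ Aᶜ) → k ≤ G.cut A)

/-- The scramble order `‖S‖`: the largest valid order. -/
noncomputable def scrambleOrder (G : Multigraph V) (S : Finset (Finset V)) : ℕ :=
  sSup {k | ValidOrder G S k}

/-- The scramble number of a multigraph: the maximum scramble order of a scramble. -/
noncomputable def scrambleNumber (G : Multigraph V) : ℕ :=
  sSup {n | ∃ S, IsScramble G S ∧ scrambleOrder G S = n}

end Multigraph

namespace Multigraph

/-- The edge-subdivision of `G` at one edge between `v` and `w`: a new vertex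
`none` is introduced in the middle of one of the edges between `v` and `w`. -/
def subdivideEdge {V : Type} [DecidableEq V] (G : Multigraph V) (v w : V) :
    Multigraph (Option V) where
  mul a b :=
    match a, b with
    | some a, some b => G.mul a b - (if s(a, b) = s(v, w) then 1 else 0)
    | none, some a => if a = v ∨ a = w then 1 else 0
    | some a, none => if a = v ∨ a = w then 1 else 0
    | none, none => 0
  symm := by
    rintro (_ | a) (_ | b)
    · rfl
    · rfl
    · rfl
    · show G.mul a b - _ = G.mul b a - _
      rw [G.symm a b, Sym2.eq_swap]
  loopless := by
    rintro (_ | a)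
    · rfl
    · show G.mul a a - _ = 0
      simp [G.loopless]

end Multigraph

/-- A multigraph bundled with its (finite, decidable) vertex type. -/
structure MG where
  V : Type
  [fin : Fintype V]
  [dec : DecidableEq V]
  G : Multigraph V

namespace MG

/-- The scramble number of a bundled multigraph. -/
noncomputable def sn (H : MG) : ℕ :=
  @Multigraph.scrambleNumber H.V H.fin H.dec H.G

/-- `H'` is obtained from `H` by a single edge-subdivision. -/
def EdgeSubdiv (H H' : MG) : Prop :=
  letI := H.dec
  ∃ v w : H.V, H.G.Adj v w ∧
    ∃ e : H'.V ≃ Option H.V,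
      ∀ a b : H'.V, H'.G.mul a b = (Multigraph.subdivideEdge H.G v w).mul (e a) (e b)

/-- `H'` is a subdivision of `H`: obtained by finitely many edge-subdivisions. -/
def IsSubdivision : MG → MG → Prop := Relation.ReflTransGen EdgeSubdiv

end MG

/-! ### Auxiliary development for `sn_subdivision` -/
set_option linter.unusedSectionVars false

section RTGHelpers

open Relation

/-- If a refl-trans chain starts at a point satisfying `P` and ends at one that doesn't,
some step of the chain crosses from `P` to `¬ P`. -/
lemma rtg_crossing {α : Type*} {r : α → α → Prop} (P : α → Prop) :
    ∀ {a b : α}, Relation.ReflTransGen r a b → P a → ¬ P b →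
      ∃ x y, r x y ∧ P x ∧ ¬ P y := by
  intro a b h
  induction h with
  | refl => exact fun ha hb => absurd ha hb
  | @tail m c _ h₂ ih =>
    intro ha hb
    by_cases hc : P m
    · exact ⟨_, _, h₂, hc, hb⟩
    · exact ih ha hc

end RTGHelpers

namespace Multigraph

variable {V : Type}

lemma adj_ne {G : Multigraph V} {a b : V} (h : G.Adj a b) : a ≠ b := by
  rintro rfl
  simp only [Adj, G.loopless, lt_self_iff_false] at h

lemma adj_symm' {G : Multigraph V} {a b : V} (h : G.Adj a b) : G.Adj b a := by
  unfold Adj at h ⊢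
  rwa [G.symm]

/-- The step relation inside a vertex subset: both ends in `B` and adjacent. -/
def Step (G : Multigraph V) (B : Finset V) (x y : V) : Prop :=
  x ∈ B ∧ y ∈ B ∧ G.Adj x y

/-- Characterisation of connected subsets in terms of `Relation.ReflTransGen` of the
ambient step relation. -/
lemma connSubset_iff (G : Multigraph V) (B : Finset V) :
    G.ConnSubset B ↔
      B.Nonempty ∧ ∀ a ∈ B, ∀ b ∈ B, Relation.ReflTransGen (G.Step B) a b := by
  constructor
  · rintro ⟨hne, hconn⟩
    refine ⟨hne, fun a ha b hb => ?_⟩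
    have h := hconn.preconnected ⟨a, Finset.mem_coe.2 ha⟩ ⟨b, Finset.mem_coe.2 hb⟩
    rw [SimpleGraph.reachable_iff_reflTransGen] at h
    exact Relation.ReflTransGen.lift (fun x : (B : Set V) => (x : V))
      (fun x y hxy => ⟨Finset.mem_coe.1 x.2, Finset.mem_coe.1 y.2, hxy⟩) _ _ h
  · rintro ⟨hne, h⟩
    refine ⟨hne, ?_⟩
    rw [SimpleGraph.connected_iff]
    obtain ⟨x0, hx0⟩ := hne
    refine ⟨fun x y => ?_, ⟨⟨x0, Finset.mem_coe.2 hx0⟩⟩⟩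
    obtain ⟨a, ha⟩ := x
    obtain ⟨b, hb⟩ := y
    have aux : ∀ {c : V}, Relation.ReflTransGen (G.Step B) a c → ∀ (hc : c ∈ (B : Set V)),
        (SimpleGraph.induce (B : Set V) G.simple).Reachable ⟨a, ha⟩ ⟨c, hc⟩ := by
      intro c hrc
      induction hrc with
      | refl => intro _; exact SimpleGraph.Reachable.refl _
      | tail _ hstep ih =>
        intro hc
        refine (ih (Finset.mem_coe.2 hstep.1)).trans (SimpleGraph.Adj.reachable ?_)
        exact hstep.2.2
    exact aux (h a (Finset.mem_coe.1 ha) b (Finset.mem_coe.1 hb)) hb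

lemma connSubset_singleton (G : Multigraph V) (x : V) : G.ConnSubset {x} := by
  rw [connSubset_iff]
  refine ⟨⟨x, Finset.mem_singleton_self x⟩, fun a ha b hb => ?_⟩
  rw [Finset.mem_singleton] at ha hb
  subst ha; subst hb
  exact Relation.ReflTransGen.refl

section Order

variable [Fintype V] [DecidableEq V] {G : Multigraph V}

lemma validOrder_zero (G : Multigraph V) (S : Finset (Finset V)) : ValidOrder G S 0 :=
  ⟨fun _ _ => Nat.zero_le _, fun _ _ _ => Nat.zero_le _⟩

lemma validOrder_le_card {S : Finset (Finset V)} {k : ℕ} (hS : IsScramble G S)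
    (h : ValidOrder G S k) : k ≤ Fintype.card V := by
  have := h.1 Finset.univ ?_
  · simpa using this
  · intro E hE
    obtain ⟨x, hx⟩ := (hS E hE).1
    exact ⟨x, Finset.mem_inter.2 ⟨hx, Finset.mem_univ x⟩⟩

lemma scrambleOrder_le_of {V₂ : Type} [Fintype V₂] [DecidableEq V₂] {G₂ : Multigraph V₂}
    {S : Finset (Finset V)} {S₂ : Finset (Finset V₂)} (hS₂ : IsScramble G₂ S₂)
    (h : ∀ k, ValidOrder G S k → ValidOrder G₂ S₂ k) :
    scrambleOrder G S ≤ scrambleOrder G₂ S₂ :=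
  csSup_le_csSup ⟨Fintype.card V₂, fun _ hk => validOrder_le_card hS₂ hk⟩
    ⟨0, validOrder_zero G S⟩ h

lemma scrambleOrder_le_card {S : Finset (Finset V)} (hS : IsScramble G S) :
    scrambleOrder G S ≤ Fintype.card V :=
  csSup_le ⟨0, validOrder_zero G S⟩ fun _ hk => validOrder_le_card hS hk

lemma le_scrambleNumber {S : Finset (Finset V)} (hS : IsScramble G S) :
    scrambleOrder G S ≤ scrambleNumber G := by
  refine le_csSup ⟨Fintype.card V, ?_⟩ ⟨S, hS, rfl⟩
  rintro n ⟨S', hS', rfl⟩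
  exact scrambleOrder_le_card hS'

lemma scrambleNumber_le_of {V₂ : Type} [Fintype V₂] [DecidableEq V₂] {G₂ : Multigraph V₂}
    (h : ∀ S : Finset (Finset V), IsScramble G S →
      ∃ S₂ : Finset (Finset V₂), IsScramble G₂ S₂ ∧ scrambleOrder G S ≤ scrambleOrder G₂ S₂) :
    scrambleNumber G ≤ scrambleNumber G₂ := by
  refine csSup_le ⟨scrambleOrder G ∅, ∅, fun E hE => absurd hE (Finset.notMem_empty E), rfl⟩ ?_
  rintro n ⟨S, hS, rfl⟩
  obtain ⟨S₂, hS₂, hle⟩ := h S hS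
  exact hle.trans (le_scrambleNumber hS₂)

end Order

section SumHelpers

variable [Fintype V] [DecidableEq V]

lemma cut_eq_sum (G : Multigraph V) (A : Finset V) :
    G.cut A = ∑ a : V, ∑ b : V, (if a ∈ A ∧ b ∉ A then G.mul a b else 0) := by
  unfold cut
  have h1 : ∀ a : V, (∑ b ∈ Aᶜ, G.mul a b)
      = ∑ b : V, (if b ∉ A then G.mul a b else 0) := by
    intro a
    rw [← Finset.sum_filter]
    congr 1
    ext x
    simp
  have h2 : (∑ a ∈ A, ∑ b ∈ Aᶜ, G.mul a b)
      = ∑ a : V, (if a ∈ A then ∑ b ∈ Aᶜ, G.mul a b else 0) := by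
    rw [← Finset.sum_filter]
    congr 1
    ext x
    simp
  rw [h2]
  refine Finset.sum_congr rfl fun a _ => ?_
  by_cases ha : a ∈ A
  · rw [if_pos ha, h1 a]
    refine Finset.sum_congr rfl fun b _ => ?_
    by_cases hb : b ∉ A <;> simp [ha, hb]
  · rw [if_neg ha]
    refine (Finset.sum_eq_zero fun b _ => ?_).symm
    simp [ha]

lemma sum_pair_support {v w : V} (hne : v ≠ w) (f : V → ℕ) :
    ∑ a : V, (if a = v ∨ a = w then f a else 0) = f v + f w := by
  rw [← Finset.sum_subset (Finset.subset_univ ({v, w} : Finset V))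
    (fun x _ hx => by
      rw [if_neg]
      simpa using hx)]
  rw [Finset.sum_pair hne, if_pos (Or.inl rfl), if_pos (Or.inr rfl)]

lemma double_collapse (A' : Finset (Option V)) (x y : V) :
    (∑ a : V, ∑ b : V,
        if (some a ∈ A' ∧ some b ∉ A') ∧ a = x ∧ b = y then (1 : ℕ) else 0)
      = if some x ∈ A' ∧ some y ∉ A' then 1 else 0 := by
  rw [Finset.sum_eq_single x
    (fun a _ ha => Finset.sum_eq_zero fun b _ => by
      rw [if_neg]; rintro ⟨_, rfl, _⟩; exact ha rfl)
    (fun hx => absurd (Finset.mem_univ x) hx)]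
  rw [Finset.sum_eq_single y
    (fun b _ hb => by rw [if_neg]; rintro ⟨_, _, rfl⟩; exact hb rfl)
    (fun hy => absurd (Finset.mem_univ y) hy)]
  by_cases h : some x ∈ A' ∧ some y ∉ A' <;> simp [h]

end SumHelpers

section Subdivide

variable [Fintype V] [DecidableEq V] {G : Multigraph V} {v w : V}

lemma sd_mul_ss (G : Multigraph V) (v w a b : V) :
    (subdivideEdge G v w).mul (some a) (some b)
      = G.mul a b - (if s(a, b) = s(v, w) then 1 else 0) := rfl

lemma sd_mul_ns (G : Multigraph V) (v w a : V) :
    (subdivideEdge G v w).mul none (some a) = if a = v ∨ a = w then 1 else 0 := rfl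

lemma sd_mul_sn (G : Multigraph V) (v w a : V) :
    (subdivideEdge G v w).mul (some a) none = if a = v ∨ a = w then 1 else 0 := rfl

lemma sd_mul_nn (G : Multigraph V) (v w : V) :
    (subdivideEdge G v w).mul none none = 0 := rfl

lemma sd_mul_le (G : Multigraph V) (v w a b : V) :
    (subdivideEdge G v w).mul (some a) (some b) ≤ G.mul a b := by
  rw [sd_mul_ss]
  exact Nat.sub_le _ _

lemma sd_add_ind (hvw : G.Adj v w) (a b : V) :
    (subdivideEdge G v w).mul (some a) (some b)
      + ((if a = v ∧ b = w then 1 else 0) + (if a = w ∧ b = v then 1 else 0))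
      = G.mul a b := by
  have hne : v ≠ w := adj_ne hvw
  rw [sd_mul_ss]
  by_cases h1 : a = v ∧ b = w
  · obtain ⟨rfl, rfl⟩ := h1
    rw [if_pos rfl, if_pos ⟨rfl, rfl⟩, if_neg (fun h => hne h.1)]
    have : 0 < G.mul a b := hvw
    omega
  · by_cases h2 : a = w ∧ b = v
    · obtain ⟨rfl, rfl⟩ := h2
      rw [if_pos (Sym2.eq_swap), if_neg h1, if_pos ⟨rfl, rfl⟩]
      have : 0 < G.mul a b := adj_symm' hvw
      omega
    · rw [if_neg (fun h => by
        rcases Sym2.eq_iff.1 h with h' | h'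
        · exact h1 h'
        · exact h2 h'), if_neg h1, if_neg h2]
      omega

/-- The key cut identity relating cuts in the subdivision to cuts in `G`. -/
lemma cut_sd_eq (hvw : G.Adj v w) (A' : Finset (Option V)) :
    (subdivideEdge G v w).cut A'
      + ((if some v ∈ A' ∧ some w ∉ A' then 1 else 0)
        + (if some w ∈ A' ∧ some v ∉ A' then 1 else 0))
    = G.cut A'.eraseNone
      + (if none ∈ A'
          then (if some v ∉ A' then 1 else 0) + (if some w ∉ A' then 1 else 0)
          else (if some v ∈ A' then 1 else 0) + (if some w ∈ A' then 1 else 0)) := by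
  classical
  have hne : v ≠ w := adj_ne hvw
  -- expand the cut of the subdivision
  have hexp : (subdivideEdge G v w).cut A'
      = (∑ a : V, ∑ b : V,
          if some a ∈ A' ∧ some b ∉ A'
            then (subdivideEdge G v w).mul (some a) (some b) else 0)
        + (((if none ∈ A' ∧ some v ∉ A' then 1 else 0)
            + (if none ∈ A' ∧ some w ∉ A' then 1 else 0))
          + ((if some v ∈ A' ∧ none ∉ A' then 1 else 0)
            + (if some w ∈ A' ∧ none ∉ A' then 1 else 0))) := by
    rw [cut_eq_sum, Fintype.sum_option]
    have hrow : (∑ y : Option V,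
        if none ∈ A' ∧ y ∉ A' then (subdivideEdge G v w).mul none y else 0)
        = (if none ∈ A' ∧ some v ∉ A' then 1 else 0)
          + (if none ∈ A' ∧ some w ∉ A' then 1 else 0) := by
      rw [Fintype.sum_option]
      have h0 : (if none ∈ A' ∧ none ∉ A' then (subdivideEdge G v w).mul none none else 0)
          = 0 := by
        rw [sd_mul_nn]; exact ite_self 0
      rw [h0, zero_add]
      have : ∀ b : V, (if none ∈ A' ∧ some b ∉ A'
            then (subdivideEdge G v w).mul none (some b) else 0)
          = (if b = v ∨ b = w then (if none ∈ A' ∧ some b ∉ A' then 1 else 0) else 0) := by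
        intro b
        rw [sd_mul_ns]
        by_cases hb : b = v ∨ b = w <;> by_cases hq : none ∈ A' ∧ some b ∉ A' <;>
          simp [hb, hq]
      rw [Finset.sum_congr rfl fun b _ => this b, sum_pair_support hne]
    rw [hrow]
    have hcols : (∑ a : V, ∑ y : Option V,
        if some a ∈ A' ∧ y ∉ A' then (subdivideEdge G v w).mul (some a) y else 0)
        = (∑ a : V, ∑ b : V,
            if some a ∈ A' ∧ some b ∉ A'
              then (subdivideEdge G v w).mul (some a) (some b) else 0)
          + ((if some v ∈ A' ∧ none ∉ A' then 1 else 0)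
            + (if some w ∈ A' ∧ none ∉ A' then 1 else 0)) := by
      have hinner : ∀ a : V, (∑ y : Option V,
          if some a ∈ A' ∧ y ∉ A' then (subdivideEdge G v w).mul (some a) y else 0)
          = (if a = v ∨ a = w then (if some a ∈ A' ∧ none ∉ A' then 1 else 0) else 0)
            + ∑ b : V, (if some a ∈ A' ∧ some b ∉ A'
                then (subdivideEdge G v w).mul (some a) (some b) else 0) := by
        intro a
        rw [Fintype.sum_option]
        congr 1
        rw [sd_mul_sn]
        by_cases hb : a = v ∨ a = w <;> by_cases hq : some a ∈ A' ∧ none ∉ A' <;>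
          simp [hb, hq]
      rw [Finset.sum_congr rfl fun a _ => hinner a, Finset.sum_add_distrib,
        sum_pair_support hne]
      ring
    rw [hcols]
    ring
  rw [hexp]
  -- relate the main double sum to `G.cut A'.eraseNone`
  have hmain : (∑ a : V, ∑ b : V,
        if some a ∈ A' ∧ some b ∉ A'
          then (subdivideEdge G v w).mul (some a) (some b) else 0)
      + ((if some v ∈ A' ∧ some w ∉ A' then 1 else 0)
        + (if some w ∈ A' ∧ some v ∉ A' then 1 else 0))
      = G.cut A'.eraseNone := by
    have hptw : ∀ a b : V,
        (if some a ∈ A' ∧ some b ∉ A'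
            then (subdivideEdge G v w).mul (some a) (some b) else 0)
          + ((if (some a ∈ A' ∧ some b ∉ A') ∧ a = v ∧ b = w then 1 else 0)
            + (if (some a ∈ A' ∧ some b ∉ A') ∧ a = w ∧ b = v then 1 else 0))
        = (if some a ∈ A' ∧ some b ∉ A' then G.mul a b else 0) := by
      intro a b
      by_cases h : some a ∈ A' ∧ some b ∉ A'
      · simpa [h] using sd_add_ind hvw a b
      · simp [h]
    have hsum : (∑ a : V, ∑ b : V,
          if some a ∈ A' ∧ some b ∉ A'
            then (subdivideEdge G v w).mul (some a) (some b) else 0)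
        + ((∑ a : V, ∑ b : V,
            if (some a ∈ A' ∧ some b ∉ A') ∧ a = v ∧ b = w then 1 else 0)
          + (∑ a : V, ∑ b : V,
            if (some a ∈ A' ∧ some b ∉ A') ∧ a = w ∧ b = v then 1 else 0))
        = ∑ a : V, ∑ b : V, (if some a ∈ A' ∧ some b ∉ A' then G.mul a b else 0) := by
      rw [← Finset.sum_add_distrib, ← Finset.sum_add_distrib]
      refine Finset.sum_congr rfl fun a _ => ?_
      rw [← Finset.sum_add_distrib, ← Finset.sum_add_distrib]
      exact Finset.sum_congr rfl fun b _ => hptw a b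
    rw [double_collapse, double_collapse] at hsum
    rw [hsum, cut_eq_sum]
    refine Finset.sum_congr rfl fun a _ => Finset.sum_congr rfl fun b _ => ?_
    have ha : a ∈ A'.eraseNone ↔ some a ∈ A' := Finset.mem_eraseNone
    have hb : b ∈ A'.eraseNone ↔ some b ∈ A' := Finset.mem_eraseNone
    by_cases h1 : some a ∈ A' <;> by_cases h2 : some b ∈ A' <;>
      simp [ha, hb, h1, h2]
  rw [← hmain]
  by_cases hn : none ∈ A' <;> by_cases hv : some v ∈ A' <;> by_cases hw : some w ∈ A' <;>
    simp [hn, hv, hw] <;> ring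

end Subdivide

end Multigraph


namespace Multigraph

variable {V : Type}

section SubdivideConn

variable [Fintype V] [DecidableEq V] {G : Multigraph V} {v w : V}

lemma sd_adj_sn (h : a = v ∨ a = w) : (subdivideEdge G v w).Adj (some a) none := by
  show 0 < (subdivideEdge G v w).mul (some a) none
  rw [sd_mul_sn, if_pos h]
  omega

lemma sd_adj_ns (h : a = v ∨ a = w) : (subdivideEdge G v w).Adj none (some a) := by
  show 0 < (subdivideEdge G v w).mul none (some a)
  rw [sd_mul_ns, if_pos h]
  omega

lemma sd_adj_ns_elim {a : V} (h : (subdivideEdge G v w).Adj none (some a)) :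
    a = v ∨ a = w := by
  by_contra hc
  have h' : 0 < (subdivideEdge G v w).mul none (some a) := h
  rw [sd_mul_ns, if_neg hc] at h'
  exact absurd h' (lt_irrefl 0)

lemma sd_adj_sn_elim {a : V} (h : (subdivideEdge G v w).Adj (some a) none) :
    a = v ∨ a = w := by
  by_contra hc
  have h' : 0 < (subdivideEdge G v w).mul (some a) none := h
  rw [sd_mul_sn, if_neg hc] at h'
  exact absurd h' (lt_irrefl 0)

lemma sd_adj_nn_elim (h : (subdivideEdge G v w).Adj (none : Option V) none) : False := by
  have h' : 0 < (subdivideEdge G v w).mul (none : Option V) none := h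
  rw [sd_mul_nn] at h'
  exact absurd h' (lt_irrefl 0)

lemma adj_of_sd_ss {p q : V} (h : (subdivideEdge G v w).Adj (some p) (some q)) :
    G.Adj p q :=
  lt_of_lt_of_le h (sd_mul_le G v w p q)

/-- Dropping the subdivision vertex from a connected subset of the subdivision yields a
connected subset of `G` (provided the subset is not just the subdivision vertex). -/
lemma connSubset_eraseNone (hvw : G.Adj v w) {E' : Finset (Option V)}
    (hE : (subdivideEdge G v w).ConnSubset E') (hne' : E' ≠ {none}) :
    G.ConnSubset E'.eraseNone := by
  rw [connSubset_iff] at hE ⊢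
  obtain ⟨hEne, hconn⟩ := hE
  have hnonempty : E'.eraseNone.Nonempty := by
    by_contra h
    rw [Finset.not_nonempty_iff_eq_empty] at h
    apply hne'
    apply Finset.Subset.antisymm
    · intro x hx
      cases x with
      | none => exact Finset.mem_singleton_self none
      | some a =>
        have : a ∈ E'.eraseNone := Finset.mem_eraseNone.2 hx
        rw [h] at this
        exact absurd this (Finset.notMem_empty a)
    · obtain ⟨x, hx⟩ := hEne
      cases x with
      | some a =>
        have : a ∈ E'.eraseNone := Finset.mem_eraseNone.2 hx
        rw [h] at this
        exact absurd this (Finset.notMem_empty a)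
      | none =>
        intro y hy
        rw [Finset.mem_singleton] at hy
        subst hy
        exact hx
  refine ⟨hnonempty, fun a ha b hb => ?_⟩
  have key : ∀ {y : Option V},
      Relation.ReflTransGen ((subdivideEdge G v w).Step E') (some a) y →
      (∀ c : V, y = some c → Relation.ReflTransGen (G.Step E'.eraseNone) a c) ∧
      (y = none → ∃ c, c ∈ E'.eraseNone ∧ (c = v ∨ c = w) ∧
          Relation.ReflTransGen (G.Step E'.eraseNone) a c) := by
    intro y hy
    induction hy with
    | refl =>
      refine ⟨fun c hc => ?_, fun h => by simp at h⟩
      injection hc with hc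
      subst hc
      exact Relation.ReflTransGen.refl
    | @tail m z _ hstep ih =>
      obtain ⟨hmE, hzE, hadj⟩ := hstep
      cases m with
      | some p =>
        cases z with
        | some q =>
          refine ⟨fun c hc => ?_, fun h => by simp at h⟩
          injection hc with hc
          subst hc
          exact (ih.1 p rfl).tail
            ⟨Finset.mem_eraseNone.2 hmE, Finset.mem_eraseNone.2 hzE, adj_of_sd_ss hadj⟩
        | none =>
          refine ⟨fun c hc => by simp at hc, fun _ => ?_⟩
          exact ⟨p, Finset.mem_eraseNone.2 hmE, sd_adj_sn_elim hadj, ih.1 p rfl⟩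
      | none =>
        cases z with
        | some q =>
          have hq : q = v ∨ q = w := sd_adj_ns_elim hadj
          obtain ⟨c, hcE, hcvw, hrtg⟩ := ih.2 rfl
          have hgoal : Relation.ReflTransGen (G.Step E'.eraseNone) a q := by
            by_cases hcq : c = q
            · subst hcq
              exact hrtg
            · refine hrtg.tail ⟨hcE, Finset.mem_eraseNone.2 hzE, ?_⟩
              rcases hcvw with rfl | rfl
              · rcases hq with rfl | rfl
                · exact absurd rfl hcq
                · exact hvw
              · rcases hq with rfl | rfl
                · exact adj_symm' hvw
                · exact absurd rfl hcq
          refine ⟨fun d hd => ?_, fun h => by simp at h⟩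
          have hqd : q = d := by injection hd
          exact hqd ▸ hgoal
        | none => exact absurd hadj sd_adj_nn_elim
  exact (key (hconn (some a) (Finset.mem_eraseNone.1 ha) (some b)
    (Finset.mem_eraseNone.1 hb))).1 b rfl

/-- The image of an egg under subdivision. -/
def phiEgg (v w : V) (E : Finset V) : Finset (Option V) :=
  if v ∈ E ∧ w ∈ E then insert none (E.image some) else E.image some

lemma mem_phiEgg_some {E : Finset V} {c : V} :
    some c ∈ phiEgg v w E ↔ c ∈ E := by
  unfold phiEgg
  split <;> simp

lemma none_mem_phiEgg {E : Finset V} :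
    none ∈ phiEgg v w E ↔ (v ∈ E ∧ w ∈ E) := by
  unfold phiEgg
  split <;> simp_all

lemma connSubset_phiEgg (hvw : G.Adj v w) {E : Finset V} (hE : G.ConnSubset E) :
    (subdivideEdge G v w).ConnSubset (phiEgg v w E) := by
  rw [connSubset_iff] at hE
  obtain ⟨⟨x0, hx0⟩, hconn⟩ := hE
  rw [phiEgg]
  by_cases hb : v ∈ E ∧ w ∈ E
  · rw [if_pos hb, connSubset_iff]
    have hmemsome : ∀ {a : V}, a ∈ E → some a ∈ insert none (E.image some) := fun ha =>
      Finset.mem_insert_of_mem (Finset.mem_image_of_mem some ha)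
    have hmemnone : (none : Option V) ∈ insert none (E.image some) :=
      Finset.mem_insert_self _ _
    have hstep : ∀ {p q : V}, G.Step E p q →
        Relation.ReflTransGen ((subdivideEdge G v w).Step (insert none (E.image some)))
          (some p) (some q) := by
      rintro p q ⟨hp, hq, hpq⟩
      by_cases hss : 0 < (subdivideEdge G v w).mul (some p) (some q)
      · exact Relation.ReflTransGen.single ⟨hmemsome hp, hmemsome hq, hss⟩
      · have hs : s(p, q) = s(v, w) := by
          by_contra hs
          apply hss
          have hpq' : 0 < G.mul p q := hpq
          rw [sd_mul_ss, if_neg hs]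
          omega
        have hp' : p = v ∨ p = w := by
          rcases Sym2.eq_iff.1 hs with ⟨h1, _⟩ | ⟨h1, _⟩
          · exact Or.inl h1
          · exact Or.inr h1
        have hq' : q = v ∨ q = w := by
          rcases Sym2.eq_iff.1 hs with ⟨_, h2⟩ | ⟨_, h2⟩
          · exact Or.inr h2
          · exact Or.inl h2
        exact Relation.ReflTransGen.head ⟨hmemsome hp, hmemnone, sd_adj_sn hp'⟩
          (Relation.ReflTransGen.single ⟨hmemnone, hmemsome hq, sd_adj_ns hq'⟩)
    have hlift : ∀ {p q : V}, Relation.ReflTransGen (G.Step E) p q →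
        Relation.ReflTransGen ((subdivideEdge G v w).Step (insert none (E.image some)))
          (some p) (some q) := by
      intro p q h
      induction h with
      | refl => exact Relation.ReflTransGen.refl
      | tail _ h2 ih => exact ih.trans (hstep h2)
    have hmem' : ∀ {x : Option V}, x ∈ insert none (E.image some) →
        x = none ∨ ∃ a, x = some a ∧ a ∈ E := by
      intro x hx
      rcases Finset.mem_insert.1 hx with h | h
      · exact Or.inl h
      · obtain ⟨a, ha, rfl⟩ := Finset.mem_image.1 h
        exact Or.inr ⟨a, rfl, ha⟩
    refine ⟨⟨none, hmemnone⟩, fun x hx y hy => ?_⟩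
    have hnv : Relation.ReflTransGen
        ((subdivideEdge G v w).Step (insert none (E.image some))) none (some v) :=
      Relation.ReflTransGen.single ⟨hmemnone, hmemsome hb.1, sd_adj_ns (Or.inl rfl)⟩
    have hvn : Relation.ReflTransGen
        ((subdivideEdge G v w).Step (insert none (E.image some))) (some v) none :=
      Relation.ReflTransGen.single ⟨hmemsome hb.1, hmemnone, sd_adj_sn (Or.inl rfl)⟩
    rcases hmem' hx with rfl | ⟨a, rfl, haE⟩
    · rcases hmem' hy with rfl | ⟨c, rfl, hcE⟩
      · exact Relation.ReflTransGen.refl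
      · exact hnv.trans (hlift (hconn v hb.1 c hcE))
    · rcases hmem' hy with rfl | ⟨c, rfl, hcE⟩
      · exact (hlift (hconn a haE v hb.1)).trans hvn
      · exact hlift (hconn a haE c hcE)
  · rw [if_neg hb, connSubset_iff]
    refine ⟨⟨some x0, Finset.mem_image_of_mem some hx0⟩, fun x hx y hy => ?_⟩
    obtain ⟨a, haE, rfl⟩ := Finset.mem_image.1 hx
    obtain ⟨c, hcE, rfl⟩ := Finset.mem_image.1 hy
    refine Relation.ReflTransGen.lift some (fun p q hpq => ?_) _ _ (hconn a haE c hcE)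
    obtain ⟨hp, hq, hpq'⟩ := hpq
    refine ⟨Finset.mem_image_of_mem some hp, Finset.mem_image_of_mem some hq, ?_⟩
    show 0 < (subdivideEdge G v w).mul (some p) (some q)
    have hs : ¬ s(p, q) = s(v, w) := by
      intro hs
      rcases Sym2.eq_iff.1 hs with ⟨rfl, rfl⟩ | ⟨rfl, rfl⟩
      · exact hb ⟨hp, hq⟩
      · exact hb ⟨hq, hp⟩
    have hpq'' : 0 < G.mul p q := hpq'
    rw [sd_mul_ss, if_neg hs]
    omega

/-- The scramble-egg map from the subdivision back to `G`. -/
def psiEgg (v w : V) (E' : Finset (Option V)) : Finset (Finset V) :=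
  if E' = {none} then {{v}, {w}} else {E'.eraseNone}

def psiSet (v w : V) (S' : Finset (Finset (Option V))) : Finset (Finset V) :=
  S'.biUnion (psiEgg v w)

def phiSet (v w : V) (S : Finset (Finset V)) : Finset (Finset (Option V)) :=
  S.image (phiEgg v w)

lemma mem_psiSet_iff {S' : Finset (Finset (Option V))} {F : Finset V} :
    F ∈ psiSet v w S' ↔ ∃ E' ∈ S',
      (E' = {none} ∧ (F = {v} ∨ F = {w})) ∨ (E' ≠ {none} ∧ F = E'.eraseNone) := by
  unfold psiSet psiEgg
  rw [Finset.mem_biUnion]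
  constructor
  · rintro ⟨E', hE', hF⟩
    by_cases h : E' = {none}
    · rw [if_pos h] at hF
      refine ⟨E', hE', Or.inl ⟨h, ?_⟩⟩
      rcases Finset.mem_insert.1 hF with h' | h'
      · exact Or.inl h'
      · exact Or.inr (Finset.mem_singleton.1 h')
    · rw [if_neg h] at hF
      exact ⟨E', hE', Or.inr ⟨h, Finset.mem_singleton.1 hF⟩⟩
  · rintro ⟨E', hE', (⟨h, hF⟩ | ⟨h, hF⟩)⟩
    · refine ⟨E', hE', ?_⟩
      rw [if_pos h]
      rcases hF with rfl | rfl
      · exact Finset.mem_insert_self _ _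
      · exact Finset.mem_insert_of_mem (Finset.mem_singleton_self _)
    · exact ⟨E', hE', by rw [if_neg h]; exact Finset.mem_singleton.2 hF⟩

lemma egg_none_touch {S' : Finset (Finset (Option V))}
    (hS' : IsScramble (subdivideEdge G v w) S') {E' : Finset (Option V)} (hE' : E' ∈ S')
    (hn : none ∈ E') (hne' : E' ≠ {none}) :
    ∃ c, c ∈ E'.eraseNone ∧ (c = v ∨ c = w) := by
  obtain ⟨_, hconn⟩ := (connSubset_iff _ _).1 (hS' E' hE')
  have : ∃ t, some t ∈ E' := by
    by_contra h
    push_neg at h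
    apply hne'
    apply Finset.Subset.antisymm
    · intro x hx
      cases x with
      | none => exact Finset.mem_singleton_self _
      | some a => exact absurd hx (h a)
    · intro x hx
      rw [Finset.mem_singleton] at hx
      subst hx
      exact hn
  obtain ⟨t, ht⟩ := this
  have hr := hconn none hn (some t) ht
  rcases Relation.ReflTransGen.cases_head hr with h | ⟨y, hy, _⟩
  · exact absurd h (by simp)
  · obtain ⟨_, hyE, hadj⟩ := hy
    cases y with
    | none => exact absurd hadj sd_adj_nn_elim
    | some c => exact ⟨c, Finset.mem_eraseNone.2 hyE, sd_adj_ns_elim hadj⟩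

lemma isScramble_psi (hvw : G.Adj v w) {S' : Finset (Finset (Option V))}
    (hS' : IsScramble (subdivideEdge G v w) S') :
    IsScramble G (psiSet v w S') := by
  intro F hF
  obtain ⟨E', hE'S, hsrc⟩ := mem_psiSet_iff.1 hF
  rcases hsrc with ⟨_, hF'⟩ | ⟨h, hF'⟩
  · rcases hF' with rfl | rfl <;> exact connSubset_singleton G _
  · subst hF'
    exact connSubset_eraseNone hvw (hS' E' hE'S) h

lemma isScramble_phi (hvw : G.Adj v w) {S : Finset (Finset V)}
    (hS : IsScramble G S) :
    IsScramble (subdivideEdge G v w) (phiSet v w S) := by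
  intro E' hE'
  obtain ⟨E, hES, rfl⟩ := Finset.mem_image.1 hE'
  exact connSubset_phiEgg hvw (hS E hES)

lemma cut_empty (G : Multigraph V) : G.cut (∅ : Finset V) = 0 := by
  simp [cut]

lemma cut_sd_insert (hvw : G.Adj v w) (A : Finset V) (h : v ∈ A ∨ w ∈ A) :
    (subdivideEdge G v w).cut (insert none (A.image some)) ≤ G.cut A := by
  have hcuteq := cut_sd_eq hvw (A' := insert none (A.image some))
  have hers : (insert none (A.image some)).eraseNone = A := by
    ext a
    simp [Finset.mem_eraseNone]
  rw [hers] at hcuteq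
  have hmn : (none : Option V) ∈ insert none (A.image some) := Finset.mem_insert_self _ _
  have hsv : some v ∈ insert none (A.image some) ↔ v ∈ A := by simp
  have hsw : some w ∈ insert none (A.image some) ↔ w ∈ A := by simp
  rw [if_pos hmn] at hcuteq
  by_cases hv : v ∈ A <;> by_cases hw : w ∈ A
  · simp [hsv, hsw, hv, hw] at hcuteq
    omega
  · simp [hsv, hsw, hv, hw] at hcuteq
    omega
  · simp [hsv, hsw, hv, hw] at hcuteq
    omega
  · rcases h with h | h
    · exact absurd h hv
    · exact absurd h hw

lemma cut_sd_image (hvw : G.Adj v w) (A : Finset V) (h : v ∉ A ∨ w ∉ A) :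
    (subdivideEdge G v w).cut (A.image some) ≤ G.cut A := by
  have hcuteq := cut_sd_eq hvw (A' := A.image some)
  have hers : (A.image some).eraseNone = A := by
    ext a
    simp [Finset.mem_eraseNone]
  rw [hers] at hcuteq
  have hmn : (none : Option V) ∉ A.image some := by simp
  have hsv : some v ∈ A.image some ↔ v ∈ A := by simp
  have hsw : some w ∈ A.image some ↔ w ∈ A := by simp
  rw [if_neg hmn] at hcuteq
  by_cases hv : v ∈ A <;> by_cases hw : w ∈ A
  · rcases h with h | h
    · exact absurd hv h
    · exact absurd hw h
  · simp [hsv, hsw, hv, hw] at hcuteq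
    omega
  · simp [hsv, hsw, hv, hw] at hcuteq
    omega
  · simp [hsv, hsw, hv, hw] at hcuteq
    omega

lemma cut_sd_none (hvw : G.Adj v w) :
    (subdivideEdge G v w).cut {none} = 2 := by
  have hcuteq := cut_sd_eq hvw (A' := ({none} : Finset (Option V)))
  rw [Finset.eraseNone_none, cut_empty] at hcuteq
  simp at hcuteq
  omega

end SubdivideConn

end Multigraph


namespace Multigraph

variable {V : Type} [Fintype V] [DecidableEq V] {G : Multigraph V} {v w : V}

/-- The hitting-set argument in the "double problem" case of the cut transfer. -/
lemma double_problem (hvw : G.Adj v w) {S' : Finset (Finset (Option V))}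
    (hS' : IsScramble (subdivideEdge G v w) S') {k : ℕ}
    (hk : ValidOrder (subdivideEdge G v w) S' k) {A : Finset V} {x y : V}
    (hxy : s(x, y) = s(v, w)) (hx : x ∈ A) (hy : y ∉ A)
    (hex1 : ¬ ∃ E ∈ S', none ∉ E ∧ E.eraseNone ⊆ A)
    (hex2 : ¬ ∃ E ∈ S', none ∉ E ∧ E.eraseNone ⊆ Aᶜ) :
    k ≤ G.cut A := by
  push_neg at hex1 hex2
  have hGxy : 0 < G.mul x y := by
    rcases Sym2.eq_iff.1 hxy with ⟨rfl, rfl⟩ | ⟨rfl, rfl⟩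
    · exact hvw
    · exact adj_symm' hvw
  have hcross : ∀ E' ∈ S', none ∉ E' → ∃ p q, some p ∈ E' ∧ some q ∈ E' ∧
      p ∈ A ∧ q ∉ A ∧ 0 < (subdivideEdge G v w).mul (some p) (some q) := by
    intro E' hE'S hnE'
    obtain ⟨_, hconn⟩ := (connSubset_iff _ _).1 (hS' E' hE'S)
    have h1 : ¬ E'.eraseNone ⊆ Aᶜ := hex2 E' hE'S hnE'
    have h2 : ¬ E'.eraseNone ⊆ A := hex1 E' hE'S hnE'
    obtain ⟨p₀, hp₀E, hp₀A⟩ : ∃ p, p ∈ E'.eraseNone ∧ p ∈ A := by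
      by_contra h
      push_neg at h
      exact h1 fun c hc => Finset.mem_compl.2 (h c hc)
    obtain ⟨q₀, hq₀E, hq₀A⟩ : ∃ q, q ∈ E'.eraseNone ∧ q ∉ A := by
      by_contra h
      push_neg at h
      exact h2 fun c hc => h c hc
    have hr := hconn (some p₀) (Finset.mem_eraseNone.1 hp₀E) (some q₀)
      (Finset.mem_eraseNone.1 hq₀E)
    obtain ⟨x', y', hstep, hPx, hPy⟩ := rtg_crossing
      (fun o : Option V => ∃ c, o = some c ∧ c ∈ A) hr ⟨p₀, rfl, hp₀A⟩
      (fun hP => by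
        obtain ⟨c, hc, hcA⟩ := hP
        have : q₀ = c := by injection hc
        exact hq₀A (this ▸ hcA))
    obtain ⟨p, rfl, hpA⟩ := hPx
    obtain ⟨hx'E, hy'E, hadj⟩ := hstep
    cases y' with
    | none => exact absurd hy'E hnE'
    | some q => exact ⟨p, q, hx'E, hy'E, hpA, fun hqA => hPy ⟨q, rfl, hqA⟩, hadj⟩
  set D : Finset V := A.filter (fun a => ∃ b, b ∉ A ∧ 0 < G.mul a b) with hD
  have hxD : x ∈ D := Finset.mem_filter.2 ⟨hx, y, hy, hGxy⟩
  have hone : ∀ a ∈ D, 1 ≤ ∑ b ∈ Aᶜ, G.mul a b := by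
    intro a haD
    obtain ⟨_, b, hbA, hb⟩ := Finset.mem_filter.1 haD
    calc 1 ≤ G.mul a b := hb
      _ ≤ ∑ b ∈ Aᶜ, G.mul a b :=
        Finset.single_le_sum (fun _ _ => Nat.zero_le _) (Finset.mem_compl.2 hbA)
  have hDcard : D.card ≤ G.cut A := by
    calc D.card = ∑ _a ∈ D, 1 := by simp
      _ ≤ ∑ a ∈ D, ∑ b ∈ Aᶜ, G.mul a b := Finset.sum_le_sum hone
      _ ≤ ∑ a ∈ A, ∑ b ∈ Aᶜ, G.mul a b :=
        Finset.sum_le_sum_of_subset (Finset.filter_subset _ _)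
      _ = G.cut A := rfl
  rcases lt_or_eq_of_le hDcard with hlt | heq
  · -- strict: use  D ∪ {none}
    have hhit : IsHitting S' (insert none (D.image some)) := by
      intro E' hE'S
      by_cases hn : none ∈ E'
      · exact ⟨none, Finset.mem_inter.2 ⟨hn, Finset.mem_insert_self _ _⟩⟩
      · obtain ⟨p, q, hpE, _, hpA, hqA, hpq⟩ := hcross E' hE'S hn
        have hpD : p ∈ D := Finset.mem_filter.2
          ⟨hpA, q, hqA, lt_of_lt_of_le hpq (sd_mul_le G v w p q)⟩
        exact ⟨some p, Finset.mem_inter.2 ⟨hpE,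
          Finset.mem_insert_of_mem (Finset.mem_image_of_mem some hpD)⟩⟩
    have h1 := hk.1 _ hhit
    have h2 : (insert none (D.image some)).card ≤ D.card + 1 :=
      (Finset.card_insert_le _ _).trans (Nat.add_le_add_right Finset.card_image_le 1)
    omega
  · -- tight: drop x from D and add none
    have hAzero : ∀ a ∈ A, a ∉ D → ∑ b ∈ Aᶜ, G.mul a b = 0 := by
      intro a haA haD
      refine Finset.sum_eq_zero fun b hb => ?_
      by_contra hb0
      exact haD (Finset.mem_filter.2
        ⟨haA, b, Finset.mem_compl.1 hb, Nat.pos_of_ne_zero hb0⟩)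
    have hsumD : ∑ a ∈ D, (∑ b ∈ Aᶜ, G.mul a b) = G.cut A :=
      Finset.sum_subset (Finset.filter_subset _ _) (fun a haA haD => hAzero a haA haD)
    have hxsum : ∑ b ∈ Aᶜ, G.mul x b = 1 := by
      by_contra hxs
      have h2le : 2 ≤ ∑ b ∈ Aᶜ, G.mul x b := by
        have := hone x hxD
        omega
      have hrest : (D.erase x).card ≤ ∑ a ∈ D.erase x, ∑ b ∈ Aᶜ, G.mul a b := by
        calc (D.erase x).card = ∑ _a ∈ D.erase x, 1 := by simp
          _ ≤ _ := Finset.sum_le_sum fun a ha => hone a (Finset.mem_of_mem_erase ha)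
      have hsplit : (∑ b ∈ Aᶜ, G.mul x b) + ∑ a ∈ D.erase x, ∑ b ∈ Aᶜ, G.mul a b
          = G.cut A := by
        rw [← hsumD]
        exact Finset.add_sum_erase D (fun a => ∑ b ∈ Aᶜ, G.mul a b) hxD
      have hcard : (D.erase x).card = D.card - 1 := Finset.card_erase_of_mem hxD
      have hDpos : 1 ≤ D.card := Finset.card_pos.2 ⟨x, hxD⟩
      omega
    have hxyone : G.mul x y = 1 := by
      have hsplit : G.mul x y + ∑ b ∈ Aᶜ.erase y, G.mul x b = 1 := by
        rw [← hxsum]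
        exact Finset.add_sum_erase Aᶜ (fun b => G.mul x b) (Finset.mem_compl.2 hy)
      omega
    have hxrest : ∀ b, b ∉ A → b ≠ y → G.mul x b = 0 := by
      intro b hbA hby
      have hsplit : G.mul x y + ∑ b ∈ Aᶜ.erase y, G.mul x b = 1 := by
        rw [← hxsum]
        exact Finset.add_sum_erase Aᶜ (fun b => G.mul x b) (Finset.mem_compl.2 hy)
      have h0 : ∑ b ∈ Aᶜ.erase y, G.mul x b = 0 := by omega
      exact (Finset.sum_eq_zero_iff).1 h0 b
        (Finset.mem_erase.2 ⟨hby, Finset.mem_compl.2 hbA⟩)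
    have hhit : IsHitting S' (insert none ((D.erase x).image some)) := by
      intro E' hE'S
      by_cases hn : none ∈ E'
      · exact ⟨none, Finset.mem_inter.2 ⟨hn, Finset.mem_insert_self _ _⟩⟩
      · obtain ⟨p, q, hpE, _, hpA, hqA, hpq⟩ := hcross E' hE'S hn
        have hpx : p ≠ x := by
          rintro rfl
          by_cases hqy : q = y
          · subst hqy
            have h0 : (subdivideEdge G v w).mul (some p) (some q) = 0 := by
              rw [sd_mul_ss, if_pos hxy, hxyone]
            omega
          · have h0 : G.mul p q = 0 := hxrest q hqA hqy
            have hle := sd_mul_le G v w p q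
            omega
        have hpD : p ∈ D := Finset.mem_filter.2
          ⟨hpA, q, hqA, lt_of_lt_of_le hpq (sd_mul_le G v w p q)⟩
        exact ⟨some p, Finset.mem_inter.2 ⟨hpE, Finset.mem_insert_of_mem
          (Finset.mem_image_of_mem some (Finset.mem_erase.2 ⟨hpx, hpD⟩))⟩⟩
    have h1 := hk.1 _ hhit
    have h2 : (insert none ((D.erase x).image some)).card ≤ (D.erase x).card + 1 :=
      (Finset.card_insert_le _ _).trans (Nat.add_le_add_right Finset.card_image_le 1)
    have hcard : (D.erase x).card = D.card - 1 := Finset.card_erase_of_mem hxD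
    have hDpos : 1 ≤ D.card := Finset.card_pos.2 ⟨x, hxD⟩
    omega

lemma valid_backward (hvw : G.Adj v w) {S' : Finset (Finset (Option V))}
    (hS' : IsScramble (subdivideEdge G v w) S') {k : ℕ}
    (hk : ValidOrder (subdivideEdge G v w) S' k) :
    ValidOrder G (psiSet v w S') k := by
  have hne : v ≠ w := adj_ne hvw
  constructor
  · -- hitting-set condition
    intro C hC
    by_cases hall : ∀ E' ∈ S', (E' ∩ C.image some).Nonempty
    · exact (hk.1 (C.image some) hall).trans Finset.card_image_le
    · push_neg at hall
      obtain ⟨E₀, hE₀S, hE₀⟩ := hall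
      have hE0eq : E₀ = {none} := by
        by_contra hne0
        have hmem : E₀.eraseNone ∈ psiSet v w S' :=
          mem_psiSet_iff.2 ⟨E₀, hE₀S, Or.inr ⟨hne0, rfl⟩⟩
        obtain ⟨c, hc⟩ := hC _ hmem
        rw [Finset.mem_inter, Finset.mem_eraseNone] at hc
        have : some c ∈ E₀ ∩ C.image some :=
          Finset.mem_inter.2 ⟨hc.1, Finset.mem_image_of_mem some hc.2⟩
        rw [hE₀] at this
        exact absurd this (Finset.notMem_empty _)
      subst hE0eq
      have hvC : v ∈ C := by
        obtain ⟨c, hc⟩ := hC {v}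
          (mem_psiSet_iff.2 ⟨{none}, hE₀S, Or.inl ⟨rfl, Or.inl rfl⟩⟩)
        rw [Finset.mem_inter, Finset.mem_singleton] at hc
        rcases hc with ⟨rfl, h⟩
        exact h
      have hwC : w ∈ C := by
        obtain ⟨c, hc⟩ := hC {w}
          (mem_psiSet_iff.2 ⟨{none}, hE₀S, Or.inl ⟨rfl, Or.inr rfl⟩⟩)
        rw [Finset.mem_inter, Finset.mem_singleton] at hc
        rcases hc with ⟨rfl, h⟩
        exact h
      have hC2 : 2 ≤ C.card := by
        have hsub : ({v, w} : Finset V) ⊆ C := by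
          intro t ht
          rcases Finset.mem_insert.1 ht with rfl | ht
          · exact hvC
          · rw [Finset.mem_singleton] at ht
            subst ht
            exact hwC
        calc 2 = ({v, w} : Finset V).card := (Finset.card_pair hne).symm
          _ ≤ C.card := Finset.card_le_card hsub
      by_cases hallu : ∀ E' ∈ S', none ∈ E'
      · have h1 := hk.1 {none} (fun E' hE' =>
          ⟨none, Finset.mem_inter.2 ⟨hallu E' hE', Finset.mem_singleton_self _⟩⟩)
        simp only [Finset.card_singleton] at h1
        omega
      · push_neg at hallu
        obtain ⟨E₃, hE₃S, hE₃⟩ := hallu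
        have h2 := hk.2 {none} ⟨{none}, hE₀S, Finset.Subset.refl _⟩
          ⟨E₃, hE₃S, fun t ht => Finset.mem_compl.2 (fun ht' => by
            rw [Finset.mem_singleton] at ht'
            subst ht'
            exact hE₃ ht)⟩
        rw [cut_sd_none hvw] at h2
        omega
  · -- cut condition
    intro A hA1 hA2
    obtain ⟨F₁, hF₁S, hF₁A⟩ := hA1
    obtain ⟨F₂, hF₂S, hF₂A⟩ := hA2
    obtain ⟨E₁, hE₁S, hsrc₁⟩ := mem_psiSet_iff.1 hF₁S
    obtain ⟨E₂, hE₂S, hsrc₂⟩ := mem_psiSet_iff.1 hF₂S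
    -- E₁ is always inside `insert none (A.image some)`
    have hinside : E₁ ⊆ insert none (A.image some) := by
      intro t ht
      rcases hsrc₁ with ⟨h, _⟩ | ⟨_, hF⟩
      · subst h
        rw [Finset.mem_singleton] at ht
        subst ht
        exact Finset.mem_insert_self _ _
      · cases t with
        | none => exact Finset.mem_insert_self _ _
        | some c =>
          have hc : c ∈ F₁ := by
            rw [hF]
            exact Finset.mem_eraseNone.2 ht
          exact Finset.mem_insert_of_mem (Finset.mem_image_of_mem some (hF₁A hc))
    -- E₂ is always outside `A.image some`
    have houtside : E₂ ⊆ (A.image some)ᶜ := by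
      intro t ht
      rw [Finset.mem_compl]
      cases t with
      | none => simp
      | some c =>
        intro hc
        have hcA : c ∈ A := by
          obtain ⟨a, haA, hac⟩ := Finset.mem_image.1 hc
          have : a = c := by injection hac
          exact this ▸ haA
        rcases hsrc₂ with ⟨h, _⟩ | ⟨_, hF⟩
        · subst h
          rw [Finset.mem_singleton] at ht
          exact absurd ht (by simp)
        · have hcF : c ∈ F₂ := by
            rw [hF]
            exact Finset.mem_eraseNone.2 ht
          exact Finset.mem_compl.1 (hF₂A hcF) hcA
    by_cases hv : v ∈ A <;> by_cases hw : w ∈ A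
    · -- both endpoints inside A: separate with `insert none (A.image some)`
      have hnone2 : none ∉ E₂ := by
        intro hn
        by_cases h0 : E₂ = {none}
        · rcases hsrc₂ with ⟨_, hF⟩ | ⟨h, _⟩
          · rcases hF with rfl | rfl
            · exact Finset.mem_compl.1 (hF₂A (Finset.mem_singleton_self v)) hv
            · exact Finset.mem_compl.1 (hF₂A (Finset.mem_singleton_self w)) hw
          · exact h h0
        · obtain ⟨c, hcE, hcvw⟩ := egg_none_touch hS' hE₂S hn h0
          have hF : F₂ = E₂.eraseNone := by
            rcases hsrc₂ with ⟨h, _⟩ | ⟨_, hF⟩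
            · exact absurd h h0
            · exact hF
          have hcF : c ∈ F₂ := by
            rw [hF]
            exact hcE
          have hcA := Finset.mem_compl.1 (hF₂A hcF)
          rcases hcvw with rfl | rfl
          · exact hcA hv
          · exact hcA hw
      have hE₂out : E₂ ⊆ (insert none (A.image some))ᶜ := by
        intro t ht
        rw [Finset.mem_compl, Finset.mem_insert]
        rintro (rfl | hmem)
        · exact hnone2 ht
        · exact Finset.mem_compl.1 (houtside ht) hmem
      have hk2 := hk.2 (insert none (A.image some))
        ⟨E₁, hE₁S, hinside⟩ ⟨E₂, hE₂S, hE₂out⟩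
      exact hk2.trans (cut_sd_insert hvw A (Or.inl hv))
    · -- v ∈ A, w ∉ A
      by_cases hex1 : ∃ E ∈ S', none ∉ E ∧ E.eraseNone ⊆ A
      · obtain ⟨E, hES, hnE, hEA⟩ := hex1
        have hEsub : E ⊆ A.image some := by
          intro t ht
          cases t with
          | none => exact absurd ht hnE
          | some c => exact Finset.mem_image_of_mem some (hEA (Finset.mem_eraseNone.2 ht))
        have hk2 := hk.2 (A.image some) ⟨E, hES, hEsub⟩ ⟨E₂, hE₂S, houtside⟩
        exact hk2.trans (cut_sd_image hvw A (Or.inr hw))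
      · by_cases hex2 : ∃ E ∈ S', none ∉ E ∧ E.eraseNone ⊆ Aᶜ
        · obtain ⟨E, hES, hnE, hEA⟩ := hex2
          have hEsub : E ⊆ (insert none (A.image some))ᶜ := by
            intro t ht
            cases t with
            | none => exact absurd ht hnE
            | some c =>
              rw [Finset.mem_compl, Finset.mem_insert]
              rintro (h | hmem)
              · exact absurd h (by simp)
              · obtain ⟨a, haA, hac⟩ := Finset.mem_image.1 hmem
                have hca : a = c := by injection hac
                subst hca
                exact Finset.mem_compl.1 (hEA (Finset.mem_eraseNone.2 ht)) haA
          have hk2 := hk.2 (insert none (A.image some))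
            ⟨E₁, hE₁S, hinside⟩ ⟨E, hES, hEsub⟩
          exact hk2.trans (cut_sd_insert hvw A (Or.inl hv))
        · exact double_problem hvw hS' hk rfl hv hw hex1 hex2
    · -- v ∉ A, w ∈ A
      by_cases hex1 : ∃ E ∈ S', none ∉ E ∧ E.eraseNone ⊆ A
      · obtain ⟨E, hES, hnE, hEA⟩ := hex1
        have hEsub : E ⊆ A.image some := by
          intro t ht
          cases t with
          | none => exact absurd ht hnE
          | some c => exact Finset.mem_image_of_mem some (hEA (Finset.mem_eraseNone.2 ht))
        have hk2 := hk.2 (A.image some) ⟨E, hES, hEsub⟩ ⟨E₂, hE₂S, houtside⟩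
        exact hk2.trans (cut_sd_image hvw A (Or.inl hv))
      · by_cases hex2 : ∃ E ∈ S', none ∉ E ∧ E.eraseNone ⊆ Aᶜ
        · obtain ⟨E, hES, hnE, hEA⟩ := hex2
          have hEsub : E ⊆ (insert none (A.image some))ᶜ := by
            intro t ht
            cases t with
            | none => exact absurd ht hnE
            | some c =>
              rw [Finset.mem_compl, Finset.mem_insert]
              rintro (h | hmem)
              · exact absurd h (by simp)
              · obtain ⟨a, haA, hac⟩ := Finset.mem_image.1 hmem
                have hca : a = c := by injection hac
                subst hca
                exact Finset.mem_compl.1 (hEA (Finset.mem_eraseNone.2 ht)) haA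
          have hk2 := hk.2 (insert none (A.image some))
            ⟨E₁, hE₁S, hinside⟩ ⟨E, hES, hEsub⟩
          exact hk2.trans (cut_sd_insert hvw A (Or.inr hw))
        · exact double_problem hvw hS' hk Sym2.eq_swap hw hv hex1 hex2
    · -- neither endpoint in A: separate with `A.image some`
      have hnone1 : none ∉ E₁ := by
        intro hn
        by_cases h0 : E₁ = {none}
        · rcases hsrc₁ with ⟨_, hF⟩ | ⟨h, _⟩
          · rcases hF with rfl | rfl
            · exact hv (hF₁A (Finset.mem_singleton_self v))
            · exact hw (hF₁A (Finset.mem_singleton_self w))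
          · exact h h0
        · obtain ⟨c, hcE, hcvw⟩ := egg_none_touch hS' hE₁S hn h0
          have hF : F₁ = E₁.eraseNone := by
            rcases hsrc₁ with ⟨h, _⟩ | ⟨_, hF⟩
            · exact absurd h h0
            · exact hF
          have hcF : c ∈ F₁ := by
            rw [hF]
            exact hcE
          rcases hcvw with rfl | rfl
          · exact hv (hF₁A hcF)
          · exact hw (hF₁A hcF)
      have hE₁sub : E₁ ⊆ A.image some := by
        intro t ht
        cases t with
        | none => exact absurd ht hnone1
        | some c =>
          have hc : c ∈ F₁ := by
            rcases hsrc₁ with ⟨h, _⟩ | ⟨_, hF⟩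
            · subst h
              exact absurd ht (by simp [Finset.mem_singleton])
            · rw [hF]
              exact Finset.mem_eraseNone.2 ht
          exact Finset.mem_image_of_mem some (hF₁A hc)
      have hk2 := hk.2 (A.image some) ⟨E₁, hE₁S, hE₁sub⟩ ⟨E₂, hE₂S, houtside⟩
      exact hk2.trans (cut_sd_image hvw A (Or.inl hv))

lemma valid_forward (hvw : G.Adj v w) {S : Finset (Finset V)} {k : ℕ}
    (hk : ValidOrder G S k) :
    ValidOrder (subdivideEdge G v w) (phiSet v w S) k := by
  constructor
  · intro C' hC'
    have h1 : C'.eraseNone.card = (C'.erase none).card := by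
      rw [← Finset.image_some_eraseNone C',
        Finset.card_image_of_injective _ (Option.some_injective V)]
    have hCcard : (C'.eraseNone ∪ (if none ∈ C' then {v} else ∅)).card ≤ C'.card := by
      by_cases hn : none ∈ C'
      · have h2 : (C'.erase none).card = C'.card - 1 := Finset.card_erase_of_mem hn
        have h3 : 1 ≤ C'.card := Finset.card_pos.2 ⟨none, hn⟩
        refine (Finset.card_union_le _ _).trans ?_
        rw [if_pos hn]
        simp only [Finset.card_singleton]
        omega
      · rw [if_neg hn, Finset.union_empty, h1, Finset.erase_eq_of_notMem hn]
    refine (hk.1 _ ?_).trans hCcard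
    intro E hES
    obtain ⟨z, hz⟩ := hC' _ (Finset.mem_image_of_mem (phiEgg v w) hES)
    rw [Finset.mem_inter] at hz
    cases z with
    | some c =>
      exact ⟨c, Finset.mem_inter.2 ⟨mem_phiEgg_some.1 hz.1,
        Finset.mem_union_left _ (Finset.mem_eraseNone.2 hz.2)⟩⟩
    | none =>
      refine ⟨v, Finset.mem_inter.2 ⟨(none_mem_phiEgg.1 hz.1).1,
        Finset.mem_union_right _ ?_⟩⟩
      rw [if_pos hz.2]
      exact Finset.mem_singleton_self v
  · intro A' h1 h2
    obtain ⟨F₁, hF₁S, hF₁⟩ := h1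
    obtain ⟨F₂, hF₂S, hF₂⟩ := h2
    obtain ⟨E₁, hE₁S, rfl⟩ := Finset.mem_image.1 hF₁S
    obtain ⟨E₂, hE₂S, rfl⟩ := Finset.mem_image.1 hF₂S
    have hE₁A : E₁ ⊆ A'.eraseNone := fun c hc =>
      Finset.mem_eraseNone.2 (hF₁ (mem_phiEgg_some.2 hc))
    have hE₂A : E₂ ⊆ (A'.eraseNone)ᶜ := by
      intro c hc
      rw [Finset.mem_compl, Finset.mem_eraseNone]
      intro hcA
      exact Finset.mem_compl.1 (hF₂ (mem_phiEgg_some.2 hc)) hcA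
    have hklow := hk.2 A'.eraseNone ⟨E₁, hE₁S, hE₁A⟩ ⟨E₂, hE₂S, hE₂A⟩
    have hcuteq := cut_sd_eq hvw (A' := A')
    have hmv : some v ∈ A' ↔ v ∈ A'.eraseNone := Finset.mem_eraseNone.symm
    have hmw : some w ∈ A' ↔ w ∈ A'.eraseNone := Finset.mem_eraseNone.symm
    by_cases hn : none ∈ A' <;> by_cases hv' : v ∈ A'.eraseNone <;>
      by_cases hw' : w ∈ A'.eraseNone <;>
      · simp [hmv, hmw, hn, hv', hw'] at hcuteq
        omega

end Multigraph


namespace Multigraph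

section Core

variable {V : Type} [Fintype V] [DecidableEq V] {G : Multigraph V} {v w : V}

/-- Scramble number is invariant under a single edge subdivision. -/
lemma scrambleNumber_subdivideEdge (hvw : G.Adj v w) :
    scrambleNumber (subdivideEdge G v w) = scrambleNumber G := by
  apply le_antisymm
  · refine scrambleNumber_le_of fun S' hS' => ?_
    exact ⟨psiSet v w S', isScramble_psi hvw hS',
      scrambleOrder_le_of (isScramble_psi hvw hS') fun k hk => valid_backward hvw hS' hk⟩
  · refine scrambleNumber_le_of fun S hS => ?_
    exact ⟨phiSet v w S, isScramble_phi hvw hS,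
      scrambleOrder_le_of (isScramble_phi hvw hS) fun k hk => valid_forward hvw hk⟩

end Core

section Iso

variable {V₁ V₂ : Type} [Fintype V₁] [DecidableEq V₁] [Fintype V₂] [DecidableEq V₂]
variable {G₁ : Multigraph V₁} {G₂ : Multigraph V₂}

lemma connSubset_image (e : V₁ ≃ V₂) (hmul : ∀ a b, G₁.mul a b = G₂.mul (e a) (e b))
    {B : Finset V₁} (hB : G₁.ConnSubset B) : G₂.ConnSubset (B.image e) := by
  rw [connSubset_iff] at hB ⊢
  obtain ⟨⟨x, hx⟩, hconn⟩ := hB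
  refine ⟨⟨e x, Finset.mem_image_of_mem e hx⟩, ?_⟩
  intro a ha b hb
  obtain ⟨a₀, ha₀, rfl⟩ := Finset.mem_image.1 ha
  obtain ⟨b₀, hb₀, rfl⟩ := Finset.mem_image.1 hb
  refine Relation.ReflTransGen.lift e (fun p q hpq => ?_) _ _ (hconn a₀ ha₀ b₀ hb₀)
  obtain ⟨hp, hq, hpq'⟩ := hpq
  refine ⟨Finset.mem_image_of_mem e hp, Finset.mem_image_of_mem e hq, ?_⟩
  show 0 < G₂.mul (e p) (e q)
  rw [← hmul]
  exact hpq'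

lemma isScramble_image (e : V₁ ≃ V₂) (hmul : ∀ a b, G₁.mul a b = G₂.mul (e a) (e b))
    {S : Finset (Finset V₁)} (hS : IsScramble G₁ S) :
    IsScramble G₂ (S.image fun E => E.image e) := by
  intro F hF
  obtain ⟨E, hES, rfl⟩ := Finset.mem_image.1 hF
  exact connSubset_image e hmul (hS E hES)

lemma cut_image (e : V₁ ≃ V₂) (hmul : ∀ a b, G₁.mul a b = G₂.mul (e a) (e b))
    (A : Finset V₁) : G₂.cut (A.image e) = G₁.cut A := by
  have hc : (A.image e)ᶜ = Aᶜ.image e := by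
    ext b
    simp only [Finset.mem_compl, Finset.mem_image]
    constructor
    · intro h
      exact ⟨e.symm b, fun hmem => h ⟨e.symm b, hmem, e.apply_symm_apply b⟩,
        e.apply_symm_apply b⟩
    · rintro ⟨a, ha, rfl⟩ ⟨a', ha', haa⟩
      rw [← e.injective haa] at ha
      exact ha ha'
  show ∑ p ∈ A.image e, ∑ q ∈ (A.image e)ᶜ, G₂.mul p q = G₁.cut A
  rw [Finset.sum_image (fun p _ q _ h => e.injective h)]
  have hinner : ∀ a : V₁, (∑ q ∈ (A.image e)ᶜ, G₂.mul (e a) q)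
      = ∑ b ∈ Aᶜ, G₁.mul a b := by
    intro a
    rw [hc, Finset.sum_image (fun p _ q _ h => e.injective h)]
    exact Finset.sum_congr rfl fun b _ => (hmul a b).symm
  exact Finset.sum_congr rfl fun a _ => hinner a

lemma valid_image (e : V₁ ≃ V₂) (hmul : ∀ a b, G₁.mul a b = G₂.mul (e a) (e b))
    {S : Finset (Finset V₁)} {k : ℕ} (hk : ValidOrder G₁ S k) :
    ValidOrder G₂ (S.image fun E => E.image e) k := by
  constructor
  · intro C₂ hC₂
    have hC : IsHitting S (C₂.image e.symm) := by
      intro E hE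
      obtain ⟨z, hz⟩ := hC₂ (E.image e) (Finset.mem_image_of_mem _ hE)
      rw [Finset.mem_inter] at hz
      obtain ⟨a, haE, rfl⟩ := Finset.mem_image.1 hz.1
      refine ⟨a, Finset.mem_inter.2 ⟨haE, ?_⟩⟩
      have h := Finset.mem_image_of_mem e.symm hz.2
      rwa [e.symm_apply_apply] at h
    have h := hk.1 _ hC
    rwa [Finset.card_image_of_injective _ e.symm.injective] at h
  · intro A₂ h1 h2
    obtain ⟨F₁, hF₁S, hF₁⟩ := h1
    obtain ⟨F₂, hF₂S, hF₂⟩ := h2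
    obtain ⟨E₁, hE₁S, rfl⟩ := Finset.mem_image.1 hF₁S
    obtain ⟨E₂, hE₂S, rfl⟩ := Finset.mem_image.1 hF₂S
    have hA : (A₂.image e.symm).image e = A₂ := by
      rw [Finset.image_image]
      have : (e ∘ e.symm) = id := by
        funext b
        simp
      rw [this, Finset.image_id]
    have hE₁A : E₁ ⊆ A₂.image e.symm := by
      intro a ha
      have h := Finset.mem_image_of_mem e.symm (hF₁ (Finset.mem_image_of_mem e ha))
      rwa [e.symm_apply_apply] at h
    have hE₂A : E₂ ⊆ (A₂.image e.symm)ᶜ := by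
      intro a ha
      rw [Finset.mem_compl]
      intro haA
      obtain ⟨b, hb, hba⟩ := Finset.mem_image.1 haA
      have hbA : e a ∈ A₂ := by
        rw [← hba, e.apply_symm_apply]
        exact hb
      exact Finset.mem_compl.1 (hF₂ (Finset.mem_image_of_mem e ha)) hbA
    calc k ≤ G₁.cut (A₂.image e.symm) := hk.2 _ ⟨E₁, hE₁S, hE₁A⟩ ⟨E₂, hE₂S, hE₂A⟩
      _ = G₂.cut ((A₂.image e.symm).image e) := (cut_image e hmul _).symm
      _ = G₂.cut A₂ := by rw [hA]

lemma scrambleNumber_eq_of_equiv (e : V₁ ≃ V₂)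
    (hmul : ∀ a b, G₁.mul a b = G₂.mul (e a) (e b)) :
    scrambleNumber G₁ = scrambleNumber G₂ := by
  have hmul' : ∀ a b, G₂.mul a b = G₁.mul (e.symm a) (e.symm b) := by
    intro a b
    rw [hmul]
    simp
  apply le_antisymm
  · refine scrambleNumber_le_of fun S hS => ?_
    exact ⟨S.image fun E => E.image e, isScramble_image e hmul hS,
      scrambleOrder_le_of (isScramble_image e hmul hS) fun k hk => valid_image e hmul hk⟩
  · refine scrambleNumber_le_of fun S hS => ?_
    exact ⟨S.image fun E => E.image e.symm, isScramble_image e.symm hmul' hS,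
      scrambleOrder_le_of (isScramble_image e.symm hmul' hS)
        fun k hk => valid_image e.symm hmul' hk⟩

end Iso

end Multigraph

lemma MG.sn_edgeSubdiv {H H' : MG} (h : MG.EdgeSubdiv H H') : H'.sn = H.sn := by
  letI := H.fin
  letI := H.dec
  letI := H'.fin
  letI := H'.dec
  obtain ⟨v, w, hvw, e, he⟩ := h
  show Multigraph.scrambleNumber H'.G = Multigraph.scrambleNumber H.G
  rw [Multigraph.scrambleNumber_eq_of_equiv e he,
    Multigraph.scrambleNumber_subdivideEdge hvw]


/-- The scramble number is invariant under subdivision. -/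
theorem sn_subdivision (H H' : MG) (hc : H.G.Connected)
    (h : MG.IsSubdivision H H') : H'.sn = H.sn := by
  have h' : Relation.ReflTransGen MG.EdgeSubdiv H H' := h
  induction h' with
  | refl => rfl
  | tail hpre hstep ih => rw [MG.sn_edgeSubdiv hstep, ih hpre]
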